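/- Let n ≥ 2, let L be a real n×n matrix with L 1_n = 0_n, and let Q be as in the context. If 0 is an eigenvalue of L of algebraic multiplicity exactly 1 and every nonzero eigenvalue of L has positive real part (as holds for the Laplacian of a digraph containing a directed spanning tree), then every eigenvalue of L̄ = Q L Qᵀ has positive real part; i.e., −L̄ is Hurwitz stable. -/

import Mathlib

open Matrix Polynomial

private lemma mapC_mul {a b c : ℕ} (A : Matrix (Fin a) (Fin b) ℝ) (B : Matrix (Fin b) (Fin c) ℝ) :
    (A * B).map Complex.ofReal = A.map Complex.ofReal * B.map Complex.ofReal := by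
  ext i j
  simp [Matrix.mul_apply, Matrix.map_apply]

private lemma mapC_mulVec_ones {a b : ℕ} (A : Matrix (Fin a) (Fin b) ℝ)
    (h : A.mulVec (fun _ => (1 : ℝ)) = 0) :
    (A.map Complex.ofReal).mulVec (fun _ => (1 : ℂ)) = 0 := by
  funext i
  have := congrFun h i
  simp only [Matrix.mulVec, dotProduct, mul_one, Pi.zero_apply] at this ⊢
  simp only [Matrix.map_apply]
  rw [← Complex.ofReal_sum]
  simp [this]

private lemma charpoly_mulVecLin {m : ℕ} (M : Matrix (Fin m) (Fin m) ℂ) :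
    (Matrix.mulVecLin M).charpoly = M.charpoly := by
  rw [← Matrix.toLin'_apply' M, ← LinearMap.charpoly_toMatrix (Matrix.toLin' M)
    (Pi.basisFun ℂ (Fin m)), LinearMap.toMatrix_eq_toMatrix', LinearMap.toMatrix'_toLin']

/-- For `n ≥ 2`, `L` real `n×n` with `L 1ₙ = 0` and `Q` as in the context:
if `0` is an eigenvalue of `L` of algebraic multiplicity exactly `1` and every nonzero
eigenvalue of `L` has positive real part, then every eigenvalue of `L̄ = Q L Qᵀ` has
positive real part, i.e. `−L̄` is Hurwitz stable. Eigenvalues are taken over ℂ, real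
matrices acting entrywise. -/
theorem stmt_2 (n : ℕ) (hn : 2 ≤ n)
    (L : Matrix (Fin n) (Fin n) ℝ)
    (hL : L.mulVec (fun _ => (1 : ℝ)) = 0)
    (Q : Matrix (Fin (n - 1)) (Fin n) ℝ)
    (hQ1 : Q.mulVec (fun _ => (1 : ℝ)) = 0)
    (hQQt : Q * Qᵀ = 1)
    (hQtQ : Qᵀ * Q = 1 - (n : ℝ)⁻¹ • Matrix.of (fun _ _ => (1 : ℝ)))
    (hmult : Polynomial.rootMultiplicity (0 : ℂ)
      (Matrix.charpoly (L.map (Complex.ofReal))) = 1)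
    (hpos : ∀ lam : ℂ,
      (∃ x : Fin n → ℂ, x ≠ 0 ∧ (L.map (Complex.ofReal)).mulVec x = lam • x) →
      lam ≠ 0 → 0 < lam.re) :
    ∀ lam : ℂ,
      (∃ x : Fin (n - 1) → ℂ, x ≠ 0 ∧
        ((Q * L * Qᵀ).map (Complex.ofReal)).mulVec x = lam • x) →
      0 < lam.re := by
  intro lam hexists
  obtain ⟨x, hx0, hx⟩ := hexists
  set LC := L.map Complex.ofReal with hLCdef
  set QC := Q.map Complex.ofReal with hQCdef
  have hQt : (Qᵀ).map Complex.ofReal = QCᵀ := by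
    rw [hQCdef]; ext i j; simp [Matrix.map_apply]
  have hx2 : (QC * LC * QCᵀ).mulVec x = lam • x := by
    rw [mapC_mul, mapC_mul, hQt] at hx
    exact hx
  have hLC1 : LC.mulVec (fun _ => (1 : ℂ)) = 0 := mapC_mulVec_ones L hL
  have hQC1 : QC.mulVec (fun _ => (1 : ℂ)) = 0 := mapC_mulVec_ones Q hQ1
  have hQQtC : QC * QCᵀ = 1 := by
    rw [← hQt, ← mapC_mul, hQQt]
    exact Matrix.map_one _ Complex.ofReal_zero Complex.ofReal_one
  have hn0 : (n : ℂ) ≠ 0 := Nat.cast_ne_zero.mpr (by omega)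
  have h1 : QCᵀ * QC = 1 - (n : ℂ)⁻¹ • Matrix.of (fun _ _ => (1 : ℂ)) := by
    rw [← hQt, ← mapC_mul, hQtQ]
    ext i j
    by_cases h : i = j <;>
      simp [h, Matrix.map_apply, Matrix.one_apply]
  have hLJ : LC * Matrix.of (fun _ _ => (1 : ℂ)) = 0 := by
    ext i j
    have := congrFun hLC1 i
    simp only [Matrix.mulVec, dotProduct, mul_one, Pi.zero_apply] at this
    simp [Matrix.mul_apply, this]
  have key : LC * (QCᵀ * QC) = LC := by
    rw [h1, Matrix.mul_sub, Matrix.mul_one, Matrix.mul_smul, hLJ, smul_zero, sub_zero]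
  set y : Fin n → ℂ := QCᵀ.mulVec x with hydef
  set w : Fin n → ℂ := LC.mulVec y with hwdef
  have hQw : QC.mulVec w = lam • x := by
    rw [hwdef, hydef, Matrix.mulVec_mulVec, Matrix.mulVec_mulVec]
    exact hx2
  have hyx : QC.mulVec y = x := by
    rw [hydef, Matrix.mulVec_mulVec, hQQtC, Matrix.one_mulVec]
  have hy0 : y ≠ 0 := by
    intro h
    rw [h, Matrix.mulVec_zero] at hyx
    exact hx0 hyx.symm
  by_cases hlam : lam = 0
  · -- lam = 0 : derive a contradiction with the multiplicity hypothesis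
    exfalso
    subst hlam
    rw [zero_smul] at hQw
    set u : Fin n → ℂ := fun _ => (1 : ℂ) with hudef
    have hQtQw : (QCᵀ * QC).mulVec w = 0 := by
      rw [← Matrix.mulVec_mulVec, hQw, Matrix.mulVec_zero]
    have hwones : w = ((n : ℂ)⁻¹ * ∑ i, w i) • (fun _ => (1 : ℂ)) := by
      have h2 : w - (n : ℂ)⁻¹ • (Matrix.of (fun _ _ => (1 : ℂ))).mulVec w = 0 := by
        have h2' := hQtQw
        rw [h1, Matrix.sub_mulVec, Matrix.one_mulVec, Matrix.smul_mulVec] at h2'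
        exact h2'
      have h3 : (Matrix.of (fun (_ _ : Fin n) => (1 : ℂ))).mulVec w = fun _ : Fin n => ∑ i, w i := by
        funext i; simp [Matrix.mulVec, dotProduct]
      funext i
      have := congrFun h2 i
      rw [h3] at this
      have h4 : w i = (n : ℂ)⁻¹ * ∑ j, w j := by
        have : w i - (n : ℂ)⁻¹ * ∑ j, w j = 0 := this
        linear_combination this
      simpa using h4
    have hLw : LC.mulVec w = 0 := by
      rw [hwones, Matrix.mulVec_smul, hLC1, smul_zero]
    -- the endomorphism
    set φ : Module.End ℂ (Fin n → ℂ) := Matrix.mulVecLin LC with hφdef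
    set S := φ.maxGenEigenspace 0 with hSdef
    have huS : u ∈ S := by
      rw [hSdef, Module.End.mem_maxGenEigenspace]
      exact ⟨1, by simp [hφdef, Matrix.mulVecLin_apply, hLC1]⟩
    have hyS : y ∈ S := by
      rw [hSdef, Module.End.mem_maxGenEigenspace]
      refine ⟨2, ?_⟩
      simp only [zero_smul, sub_zero, pow_two, Module.End.mul_apply]
      simp [hφdef, Matrix.mulVecLin_apply, ← hwdef, hLw]
    -- sum of y is zero
    have hsumQ : ∀ j, ∑ i, QC j i = 0 := by
      intro j
      have := congrFun hQC1 j
      simpa [Matrix.mulVec, dotProduct, hudef] using this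
    have hsumy : ∑ i, y i = 0 := by
      have : ∑ i, y i = ∑ j, (∑ i, QC j i) * x j := by
        rw [hydef]
        simp only [Matrix.mulVec, dotProduct, Matrix.transpose_apply, Finset.sum_mul]
        rw [Finset.sum_comm]
      rw [this]
      simp [hsumQ]
    -- linear independence of the pair in S
    have hpair : LinearIndependent ℂ ![(⟨u, huS⟩ : S), (⟨y, hyS⟩ : S)] := by
      rw [LinearIndependent.pair_iff]
      intro s t hst
      have hst' : s • u + t • y = 0 := by
        have := congrArg (Subtype.val) hst
        simpa using this
      have hs : s = 0 := by
        have hsum : ∑ i, (s • u + t • y) i = 0 := by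
          rw [hst']; simp
        simp only [hudef, Pi.add_apply, Pi.smul_apply, smul_eq_mul, mul_one] at hsum
        rw [Finset.sum_add_distrib, Finset.sum_const, ← Finset.mul_sum, hsumy, mul_zero,
          add_zero, Finset.card_univ, Fintype.card_fin, nsmul_eq_mul] at hsum
        rcases mul_eq_zero.mp hsum with h | h
        · exact absurd h hn0
        · exact h
      refine ⟨hs, ?_⟩
      rw [hs, zero_smul, zero_add] at hst'
      rcases smul_eq_zero.mp hst' with h | h
      · exact h
      · exact absurd h hy0
    have hcard : (2 : ℕ) ≤ Module.finrank ℂ S := by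
      have := hpair.fintype_card_le_finrank
      simpa using this
    have hfr : Module.finrank ℂ S = 1 := by
      rw [hSdef, LinearMap.finrank_maxGenEigenspace_eq, charpoly_mulVecLin]
      exact hmult
    omega
  · -- lam ≠ 0 : w is an eigenvector of LC with eigenvalue lam
    have hw0 : w ≠ 0 := by
      intro h
      rw [h, Matrix.mulVec_zero] at hQw
      exact hx0 (by simpa [hlam, eq_comm] using (smul_eq_zero.mp hQw.symm).resolve_left hlam)
    have hLw : LC.mulVec w = lam • w := by
      have : lam • w = (LC * (QCᵀ * QC)).mulVec w := by
        rw [← Matrix.mulVec_mulVec, ← Matrix.mulVec_mulVec, hQw, hwdef,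
          Matrix.mulVec_smul, hydef, Matrix.mulVec_smul]
      rw [this, key]
    exact hpos lam ⟨w, hw0, hLw⟩ hlam
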